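/- Let K = [−1,1] ⊆ ℝ, let T ≥ 1, let 1 ≤ w ≤ T, and let 0 < η ≤ 1. There exists a probability distribution D over sequences (f_1, …, f_T) of affine functions on K, each bounded by 1 in absolute value and with constant derivative (0-smooth), such that for every deterministic online algorithm — i.e., every sequence of maps where x_t ∈ K is determined by (f_1, …, f_{t−1}) — the expected w-local regret satisfies E_D[ Σ_{t=1}^T |∇_{K,η} F_{t,w}(x_t)|² ] ≥ (1/(4w)) · ⌊T/(2w)⌋. -/

import Mathlib

open RealInnerProductSpace

/- Euclidean (nearest-point) projection onto a set `K`.  For a nonempty closed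
convex set in a complete inner product space this is the usual orthogonal
projection onto `K`. -/
open Classical in
noncomputable def projOn {E : Type*} [NormedAddCommGroup E] [InnerProductSpace ℝ E]
    (K : Set E) (u : E) : E :=
  if h : ∃ v, v ∈ K ∧ ∀ w ∈ K, ‖u - v‖ ≤ ‖u - w‖ then h.choose else u

/- The `(K, η)`-projected gradient of `f` at `x`:
`∇_{K,η} f(x) = (1/η) (x − Π_K[x − η ∇f(x)])`. -/
noncomputable def projGrad {E : Type*} [NormedAddCommGroup E] [InnerProductSpace ℝ E]
    [CompleteSpace E] (K : Set E) (η : ℝ) (f : E → ℝ) (x : E) : E :=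
  (1 / η) • (x - projOn K (x - η • gradient f x))

/- The sliding-window time average `F_{t,w}(x) = (1/w) ∑_{i=0}^{w-1} f_{t-i}(x)`,
where natural-number subtraction together with `f 0 = 0` encodes the convention
that `f_t ≡ 0` for `t ≤ 0`. -/
noncomputable def Favg {E : Type*} (f : ℕ → E → ℝ) (w t : ℕ) (x : E) : ℝ :=
  (1 / (w : ℝ)) * ∑ i ∈ Finset.range w, f (t - i) x

/- The affine loss function of round `s` (1-indexed) determined by the
coefficient pair `c ⟨s−1⟩ = (slope, intercept)`, i.e. `f_s(x) = a_s x + b_s`;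
rounds `s = 0` (standing for `t ≤ 0`) and `s > T` have zero loss.  Affine
functions are exactly the `0`-smooth ones (constant derivative). -/
def lossAt (T : ℕ) (c : Fin T → ℝ × ℝ) (s : ℕ) : ℝ → ℝ :=
  if h : 1 ≤ s ∧ s ≤ T then
    fun x => (c ⟨s - 1, by omega⟩).1 * x + (c ⟨s - 1, by omega⟩).2
  else fun _ => 0

namespace LRLB

/-! ### The adversarial construction -/

/-- `t` (1-indexed round) is a "signal" round: its position within its block of
length `2w` is `w + 2k` (an even offset past `w`), and `t` is within the horizon `N`. -/
def isSig (w N t : ℕ) : Prop :=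
  w ≤ t % (2*w) ∧ (t % (2*w) - w) % 2 = 0 ∧ t < N

instance (w N t : ℕ) : Decidable (isSig w N t) := by unfold isSig; infer_instance

/-- The random sign of round `t` (`±1`), read off the Boolean vector `s`. -/
noncomputable def eps (T : ℕ) (s : Fin T → Bool) (t : ℕ) : ℝ :=
  if h : 1 ≤ t ∧ t ≤ T then (if s ⟨t-1, by omega⟩ then 1 else -1) else 0

/-- The slope of the loss at round `t`: the fresh sign at signal rounds, minus the
previous sign at the round right after a signal round, `0` otherwise. -/
noncomputable def sl (T w N : ℕ) (s : Fin T → Bool) (t : ℕ) : ℝ :=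
  if isSig w N t then eps T s t
  else if 1 ≤ t ∧ isSig w N (t-1) then -eps T s (t-1) else 0

/-- The coefficient sequence determined by the sign vector `s`. -/
noncomputable def cfun (T w N : ℕ) (s : Fin T → Bool) : Fin T → ℝ × ℝ :=
  fun i => (sl T w N s ((i : ℕ) + 1), 0)

lemma abs_eps_le (T : ℕ) (s : Fin T → Bool) (t : ℕ) : |eps T s t| ≤ 1 := by
  unfold eps; split_ifs <;> norm_num

lemma abs_sl_le (T w N : ℕ) (s : Fin T → Bool) (t : ℕ) : |sl T w N s t| ≤ 1 := by
  unfold sl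
  split_ifs with h1 h2
  · exact abs_eps_le T s t
  · rw [abs_neg]; exact abs_eps_le T s (t-1)
  · norm_num

lemma mod_helper (w b q : ℕ) (hb : b % (2*w) = 0) (hq : q < 2*w) :
    (b + q) % (2*w) = q := by
  simp [Nat.add_mod, hb, Nat.mod_eq_of_lt hq]

lemma isSig_of (w N b q : ℕ) (hb : b % (2*w) = 0) (hbN : b + 2*w ≤ N)
    (hq1 : w ≤ q) (hq2 : q < 2*w) (hpar : (q - w) % 2 = 0) : isSig w N (b + q) := by
  refine ⟨?_, ?_, by omega⟩
  · rw [mod_helper w b q hb hq2]; exact hq1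
  · rw [mod_helper w b q hb hq2]; exact hpar

lemma not_isSig_low (w N b q : ℕ) (hb : b % (2*w) = 0) (hq : q < w) :
    ¬ isSig w N (b + q) := by
  intro ⟨h1, _, _⟩
  rw [mod_helper w b q hb (by omega)] at h1
  omega

lemma not_isSig_par (w N b q : ℕ) (hb : b % (2*w) = 0) (hq1 : w ≤ q) (hq2 : q < 2*w)
    (hpar : (q - w) % 2 = 1) : ¬ isSig w N (b + q) := by
  intro ⟨h1, h2, _⟩
  rw [mod_helper w b q hb hq2] at h2
  omega

lemma isSig_one_le (w N t : ℕ) (hw : 1 ≤ w) (h : isSig w N t) : 1 ≤ t := by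
  obtain ⟨h1, _, _⟩ := h
  have := Nat.mod_le t (2*w)
  omega

lemma sl_of_sig (T w N : ℕ) (s : Fin T → Bool) (t : ℕ) (h : isSig w N t) :
    sl T w N s t = eps T s t := by
  unfold sl; rw [if_pos h]

lemma sl_of_cancel (T w N : ℕ) (s : Fin T → Bool) (t : ℕ) (hw : 1 ≤ w)
    (h1 : ¬ isSig w N t) (h2 : isSig w N (t-1)) :
    sl T w N s t = -eps T s (t-1) := by
  have ht : 1 ≤ t - 1 := isSig_one_le w N (t-1) hw h2
  unfold sl; rw [if_neg h1, if_pos ⟨by omega, h2⟩]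

lemma sl_of_zero (T w N : ℕ) (s : Fin T → Bool) (t : ℕ)
    (h1 : ¬ isSig w N t) (h2 : ¬ isSig w N (t-1)) :
    sl T w N s t = 0 := by
  unfold sl; rw [if_neg h1, if_neg (by tauto)]

lemma sl_out (T w N : ℕ) (s : Fin T → Bool) (t : ℕ) (hw : 1 ≤ w) (hNT : N ≤ T)
    (ht : ¬ (1 ≤ t ∧ t ≤ T)) : sl T w N s t = 0 := by
  apply sl_of_zero
  · intro h
    have h1 := isSig_one_le w N t hw h
    have h3 := h.2.2
    omega
  · intro h
    have h1 := isSig_one_le w N (t-1) hw h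
    have h3 := h.2.2
    omega

/-- The loss functions generated by `cfun` are exactly `x ↦ sl(t) * x`. -/
lemma lossAt_cfun (T w N : ℕ) (hw : 1 ≤ w) (hNT : N ≤ T) (s : Fin T → Bool) (t : ℕ) (x : ℝ) :
    lossAt T (cfun T w N s) t x = sl T w N s t * x := by
  unfold lossAt
  split_ifs with h
  · show (cfun T w N s ⟨t-1, by omega⟩).1 * x + (cfun T w N s ⟨t-1, by omega⟩).2 = _
    unfold cfun
    simp only
    have : t - 1 + 1 = t := by omega
    rw [this, add_zero]
  · rw [sl_out T w N s t hw hNT h]; ring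

lemma Favg_eq (T w N : ℕ) (hw : 1 ≤ w) (hNT : N ≤ T) (s : Fin T → Bool) (t : ℕ) :
    Favg (lossAt T (cfun T w N s)) w t
      = fun x => ((1 / (w : ℝ)) * ∑ i ∈ Finset.range w, sl T w N s (t - i)) * x := by
  funext x
  unfold Favg
  rw [Finset.sum_congr rfl (fun i _ => lossAt_cfun T w N hw hNT s (t - i) x),
    ← Finset.sum_mul]
  ring

/-! ### Window sum -/

lemma partA (T w N : ℕ) (hw : 1 ≤ w) (s : Fin T → Bool) (b : ℕ)
    (hb : b % (2*w) = 0) (hbN : b + 2*w ≤ N) :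
    ∀ k, 2*k + 1 ≤ w →
      ∑ i ∈ Finset.range (2*k+1), sl T w N s (b + w + 2*k - i) = eps T s (b + w + 2*k) := by
  intro k
  induction k with
  | zero =>
    intro hk
    have h0 : 2*0+1 = 1 := rfl
    rw [h0, Finset.sum_range_one]
    have harg : b + w + 2*0 - 0 = b + w := by omega
    have harg2 : b + w + 2*0 = b + w := by omega
    rw [harg, harg2]
    exact sl_of_sig T w N s (b+w) (isSig_of w N b w hb hbN le_rfl (by omega) (by omega))
  | succ k ih =>
    intro hk
    have hk' : 2*k + 1 ≤ w := by omega
    have hrange : 2*(k+1)+1 = (2*k+1) + 1 + 1 := by omega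
    rw [hrange, Finset.sum_range_succ', Finset.sum_range_succ']
    have e1 : ∑ i ∈ Finset.range (2*k+1), sl T w N s (b + w + 2*(k+1) - (i+1+1))
        = eps T s (b + w + 2*k) := by
      rw [Finset.sum_congr rfl (fun i hi => ?_)]
      · exact ih hk'
      · congr 1
        have := Finset.mem_range.mp hi
        omega
    rw [e1]
    -- the i = 1 term : cancel round b + (w + 2k + 1)
    have harg1 : b + w + 2*(k+1) - (0+1) = b + (w + 2*k + 1) := by omega
    have e2 : sl T w N s (b + w + 2*(k+1) - (0+1)) = -eps T s (b + w + 2*k) := by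
      rw [harg1]
      have h1 : ¬ isSig w N (b + (w + 2*k+1)) :=
        not_isSig_par w N b (w+2*k+1) hb (by omega) (by omega) (by omega)
      have hpred : b + (w + 2*k + 1) - 1 = b + (w + 2*k) := by omega
      have h2 : isSig w N (b + (w + 2*k+1) - 1) := by
        rw [hpred]
        exact isSig_of w N b (w+2*k) hb hbN (by omega) (by omega) (by omega)
      rw [sl_of_cancel T w N s _ hw h1 h2, hpred]
      have hassoc : b + (w + 2*k) = b + w + 2*k := by omega
      rw [hassoc]
    rw [e2]
    -- the i = 0 term : signal round b + (w + 2k + 2)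
    have harg0 : b + w + 2*(k+1) - 0 = b + (w + 2*(k+1)) := by omega
    have e3 : sl T w N s (b + w + 2*(k+1) - 0) = eps T s (b + w + 2*(k+1)) := by
      rw [harg0]
      have := sl_of_sig T w N s (b + (w + 2*(k+1)))
        (isSig_of w N b (w + 2*(k+1)) hb hbN (by omega) (by omega) (by omega))
      rw [this]
      have hassoc : b + (w + 2*(k+1)) = b + w + 2*(k+1) := by omega
      rw [hassoc]
    rw [e3]
    ring

lemma window_sum (T w N : ℕ) (hw : 1 ≤ w) (hNT : N ≤ T) (s : Fin T → Bool) (b k : ℕ)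
    (hb : b % (2*w) = 0) (hbN : b + 2*w ≤ N) (hk : 2*k + 1 ≤ w) :
    ∑ i ∈ Finset.range w, sl T w N s (b + w + 2*k - i) = eps T s (b + w + 2*k) := by
  have hsplit : Finset.range w = Finset.Ico 0 w := by rw [Finset.range_eq_Ico]
  rw [hsplit, ← Finset.sum_Ico_consecutive _ (Nat.zero_le (2*k+1)) hk, ← Finset.range_eq_Ico]
  have hzero : ∑ i ∈ Finset.Ico (2*k+1) w, sl T w N s (b + w + 2*k - i) = 0 := by
    apply Finset.sum_eq_zero
    intro i hi
    obtain ⟨hi1, hi2⟩ := Finset.mem_Ico.mp hi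
    have harg : b + w + 2*k - i = b + (w + 2*k - i) := by omega
    rw [harg]
    apply sl_of_zero
    · exact not_isSig_low w N b _ hb (by omega)
    · have hpred : b + (w + 2*k - i) - 1 = b + (w + 2*k - i - 1) := by omega
      rw [hpred]
      exact not_isSig_low w N b _ hb (by omega)
  rw [hzero, add_zero]
  exact partA T w N hw s b hb hbN k hk

/-! ### Agreement lemmas (measurability of the algorithm w.r.t. the past) -/

lemma eps_congr (T : ℕ) (s s' : Fin T → Bool) (t : ℕ)
    (h : ∀ (hh : t - 1 < T), s ⟨t-1, hh⟩ = s' ⟨t-1, hh⟩) :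
    eps T s t = eps T s' t := by
  unfold eps
  by_cases h1 : 1 ≤ t ∧ t ≤ T
  · rw [dif_pos h1, dif_pos h1, h (by omega)]
  · rw [dif_neg h1, dif_neg h1]

lemma sl_congr (T w N : ℕ) (hw : 1 ≤ w) (s s' : Fin T → Bool) (t r : ℕ)
    (ht : t < r) (hagree : ∀ i : Fin T, (i : ℕ) ≠ r - 1 → s i = s' i) :
    sl T w N s t = sl T w N s' t := by
  unfold sl
  split_ifs with h1 h2
  · have h1t := isSig_one_le w N t hw h1
    apply eps_congr
    intro hh
    exact hagree ⟨t-1, hh⟩ (by simp; omega)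
  · have h1t := isSig_one_le w N (t-1) hw h2.2
    rw [eps_congr T s s' (t-1) (fun hh => hagree ⟨t-1-1, hh⟩ (by simp; omega))]
  · rfl

/-! ### The projection on `[-1,1]` -/

lemma projOn_Icc (u : ℝ) :
    projOn (Set.Icc (-1 : ℝ) 1) u = max (-1) (min 1 u) := by
  set v₀ := max (-1 : ℝ) (min 1 u) with hv₀
  have hv₀K : v₀ ∈ Set.Icc (-1 : ℝ) 1 := by
    constructor
    · exact le_max_left _ _
    · apply max_le (by norm_num) (min_le_left _ _)
  have hmin : ∀ z ∈ Set.Icc (-1 : ℝ) 1, ‖u - v₀‖ ≤ ‖u - z‖ := by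
    intro z hz
    obtain ⟨hz1, hz2⟩ := hz
    rw [Real.norm_eq_abs, Real.norm_eq_abs]
    rcases le_total u 1 with h1 | h1
    · rcases le_total (-1 : ℝ) u with h2 | h2
      · have : v₀ = u := by
          rw [hv₀, min_eq_right h1, max_eq_right h2]
        rw [this, sub_self, abs_zero]
        exact abs_nonneg _
      · have : v₀ = -1 := by
          rw [hv₀, min_eq_right (by linarith), max_eq_left (by linarith)]
        rw [this]
        have ha : |u - -1| = -1 - u := by rw [abs_of_nonpos (by linarith)]; ring
        rw [ha]
        have := neg_abs_le (u - z)
        linarith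
    · have : v₀ = 1 := by
        rw [hv₀, min_eq_left (by linarith), max_eq_right (by norm_num)]
      rw [this]
      have ha : |u - 1| = u - 1 := abs_of_nonneg (by linarith)
      rw [ha]
      have := le_abs_self (u - z)
      linarith
  have hex : ∃ v, v ∈ Set.Icc (-1 : ℝ) 1 ∧
      ∀ z ∈ Set.Icc (-1 : ℝ) 1, ‖u - v‖ ≤ ‖u - z‖ := ⟨v₀, hv₀K, hmin⟩
  unfold projOn
  rw [dif_pos hex]
  obtain ⟨hK, hm⟩ := hex.choose_spec
  set v := hex.choose with hv
  have h1 : ‖u - v‖ ≤ ‖u - v₀‖ := hm v₀ hv₀K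
  have h2 : ‖u - v₀‖ ≤ ‖u - v‖ := hmin v hK
  obtain ⟨hK1, hK2⟩ := hK
  rw [Real.norm_eq_abs, Real.norm_eq_abs] at h1 h2
  rcases le_total u 1 with hu1 | hu1
  · rcases le_total (-1 : ℝ) u with hu2 | hu2
    · have hveq : v₀ = u := by rw [hv₀, min_eq_right hu1, max_eq_right hu2]
      rw [hveq] at h1 ⊢
      rw [sub_self, abs_zero] at h1
      have := abs_nonneg (u - v)
      have h0 : |u - v| = 0 := le_antisymm h1 this
      have := abs_eq_zero.mp h0
      linarith
    · have hveq : v₀ = -1 := by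
        rw [hv₀, min_eq_right (by linarith), max_eq_left (by linarith)]
      rw [hveq] at h1 ⊢
      have ha : |u - -1| = -1 - u := by rw [abs_of_nonpos (by linarith)]; ring
      rw [ha] at h1
      have hb : |u - v| = v - u := by rw [abs_of_nonpos (by linarith)]; ring
      rw [hb] at h1
      linarith
  · have hveq : v₀ = 1 := by
      rw [hv₀, min_eq_left (by linarith), max_eq_right (by norm_num)]
    rw [hveq] at h1 ⊢
    have ha : |u - 1| = u - 1 := abs_of_nonneg (by linarith)
    rw [ha] at h1
    have hb : |u - v| = u - v := abs_of_nonneg (by linarith)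
    rw [hb] at h1
    linarith

/-! ### Gradient of a linear function, and `projGrad` on linear functions -/

lemma gradient_linear (A y : ℝ) : gradient (fun x => A * x) y = A := by
  have h : HasDerivAt (fun x : ℝ => A * x) A y := by
    simpa using (hasDerivAt_id y).const_mul A
  exact h.hasGradientAt'.gradient

lemma projGrad_linear (K : Set ℝ) (η A x : ℝ) :
    projGrad K η (fun y => A * y) x = (1/η) • (x - projOn K (x - η • A)) := by
  unfold projGrad
  rw [gradient_linear]

/-! ### The key pointwise inequality -/

lemma key_core (w : ℕ) (hw : 1 ≤ w) (η x : ℝ) (hη0 : 0 < η) (hη1 : η ≤ 1)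
    (hx : x ∈ Set.Icc (-1 : ℝ) 1) :
    (1/(w:ℝ))^2 ≤
      ‖(1/η) • (x - projOn (Set.Icc (-1:ℝ) 1) (x - η • (1/(w:ℝ) * 1)))‖^2 +
      ‖(1/η) • (x - projOn (Set.Icc (-1:ℝ) 1) (x - η • (1/(w:ℝ) * (-1))))‖^2 := by
  obtain ⟨hx1, hx2⟩ := hx
  have hw' : (1:ℝ) ≤ (w:ℝ) := by exact_mod_cast hw
  have hwpos : (0:ℝ) < (w:ℝ) := by linarith
  have ha0 : 0 < η * (1/(w:ℝ)) := by positivity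
  have ha1 : η * (1/(w:ℝ)) ≤ 1 := by
    rw [mul_one_div, div_le_one hwpos]; linarith
  rw [projOn_Icc, projOn_Icc]
  simp only [smul_eq_mul, Real.norm_eq_abs, sq_abs]
  rcases le_or_gt (-1 : ℝ) (x - η * (1/(w:ℝ) * 1)) with h | h
  · have hle : x - η * (1/(w:ℝ) * 1) ≤ 1 := by nlinarith
    rw [min_eq_right hle, max_eq_right h]
    have hval : 1/η * (x - (x - η * (1/(w:ℝ) * 1))) = 1/(w:ℝ) := by
      field_simp
      ring
    rw [hval]
    nlinarith [sq_nonneg (1/η * (x - max (-1) (min 1 (x - η * (1/(w:ℝ) * (-1))))))]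
  · have hge : (-1 : ℝ) ≤ x - η * (1/(w:ℝ) * (-1)) := by nlinarith
    have hle : x - η * (1/(w:ℝ) * (-1)) ≤ 1 := by nlinarith
    rw [min_eq_right hle, max_eq_right hge]
    have hval : 1/η * (x - (x - η * (1/(w:ℝ) * (-1)))) = -(1/(w:ℝ)) := by
      field_simp
      ring
    rw [hval]
    nlinarith [sq_nonneg (1/η * (x - max (-1) (min 1 (x - η * (1/(w:ℝ) * 1)))))]

/-! ### The per-signal-round expected regret bound -/

lemma signal_sum_bound (T w N : ℕ) (hw : 1 ≤ w) (hNT : N ≤ T)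
    (η : ℝ) (hη0 : 0 < η) (hη1 : η ≤ 1)
    (alg : ℕ → (Fin T → ℝ × ℝ) → ℝ)
    (halgK : ∀ t c, alg t c ∈ Set.Icc (-1 : ℝ) 1)
    (halgA : ∀ t (c c' : Fin T → ℝ × ℝ), (∀ s : Fin T, (s : ℕ) + 1 < t → c s = c' s) →
      alg t c = alg t c')
    (r b k : ℕ) (hrdef : r = b + w + 2*k)
    (hb : b % (2*w) = 0) (hbN : b + 2*w ≤ N) (hk : 2*k + 1 ≤ w) :
    (2:ℝ)^T * (1/(w:ℝ))^2 / 2 ≤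
      ∑ s : Fin T → Bool, ‖projGrad (Set.Icc (-1 : ℝ) 1) η
        (Favg (lossAt T (cfun T w N s)) w r)
        (alg r (cfun T w N s))‖ ^ 2 := by
  classical
  subst hrdef
  have hr1 : 1 ≤ b + w + 2*k := by omega
  have hrT : b + w + 2*k ≤ T := by omega
  set i₀ : Fin T := ⟨b + w + 2*k - 1, by omega⟩ with hi₀
  set F : (Fin T → Bool) → ℝ := fun s =>
    ‖projGrad (Set.Icc (-1 : ℝ) 1) η (Favg (lossAt T (cfun T w N s)) w (b + w + 2*k))
      (alg (b + w + 2*k) (cfun T w N s))‖ ^ 2 with hF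
  -- evaluate each term
  have hterm : ∀ s : Fin T → Bool, F s =
      ‖(1/η) • (alg (b + w + 2*k) (cfun T w N s) - projOn (Set.Icc (-1:ℝ) 1)
        (alg (b + w + 2*k) (cfun T w N s) - η • (1/(w:ℝ) * eps T s (b + w + 2*k))))‖ ^ 2 := by
    intro s
    rw [hF]
    simp only
    rw [Favg_eq T w N hw hNT s (b + w + 2*k),
      window_sum T w N hw hNT s b k hb hbN hk, projGrad_linear]
  -- the flip involution
  set φ : (Fin T → Bool) → (Fin T → Bool) := fun s => Function.update s i₀ (!(s i₀)) with hφ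
  have hφapp : ∀ (s : Fin T → Bool) (i : Fin T), i ≠ i₀ → φ s i = s i := by
    intro s i hi
    rw [hφ]
    exact Function.update_of_ne hi _ _
  have hφinv : Function.Involutive φ := by
    intro s
    funext i
    rcases eq_or_ne i i₀ with rfl | hne
    · simp [hφ, Function.update_self]
    · rw [hφapp _ _ hne, hφapp _ _ hne]
  -- the algorithm plays the same point on s and φ s
  have hxeq : ∀ s, alg (b + w + 2*k) (cfun T w N s) = alg (b + w + 2*k) (cfun T w N (φ s)) := by
    intro s
    apply halgA
    intro idx hidx
    simp only [cfun]
    have hsl : sl T w N s ((idx:ℕ)+1) = sl T w N (φ s) ((idx:ℕ)+1) := by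
      apply sl_congr T w N hw _ _ _ (b + w + 2*k) (by omega)
      intro i hi
      refine (hφapp s i ?_).symm
      intro hc
      apply hi
      rw [hc, hi₀]
    rw [hsl]
  -- eps values
  have heps : ∀ s : Fin T → Bool, eps T s (b + w + 2*k) = if s i₀ then 1 else -1 := by
    intro s
    unfold eps
    rw [dif_pos ⟨hr1, hrT⟩, hi₀]
  have hepsφ : ∀ s : Fin T → Bool, eps T (φ s) (b + w + 2*k) = if s i₀ then -1 else 1 := by
    intro s
    rw [heps (φ s), hφ]
    simp only [Function.update_self]
    cases h : s i₀ <;> simp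
  -- pairwise bound
  have hpair : ∀ s, (1/(w:ℝ))^2 ≤ F s + F (φ s) := by
    intro s
    rw [hterm s, hterm (φ s), ← hxeq s, heps s, hepsφ s]
    have hxK : alg (b + w + 2*k) (cfun T w N s) ∈ Set.Icc (-1:ℝ) 1 := halgK _ _
    cases h : s i₀
    · simp only [h, Bool.false_eq_true, if_false]
      rw [add_comm]
      exact key_core w hw η _ hη0 hη1 hxK
    · simp only [h, if_true]
      exact key_core w hw η _ hη0 hη1 hxK
  -- sum up
  have hsum2 : ∑ s : Fin T → Bool, F (φ s) = ∑ s : Fin T → Bool, F s :=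
    Equiv.sum_comp (Function.Involutive.toPerm φ hφinv) F
  have hcard : (Finset.univ : Finset (Fin T → Bool)).card = 2^T := by
    rw [Finset.card_univ]; simp
  have hbig : (2:ℝ)^T * (1/(w:ℝ))^2 ≤ ∑ s : Fin T → Bool, (F s + F (φ s)) := by
    calc (2:ℝ)^T * (1/(w:ℝ))^2
        = ∑ _s : Fin T → Bool, (1/(w:ℝ))^2 := by
          rw [Finset.sum_const, hcard, nsmul_eq_mul]; push_cast; ring
      _ ≤ ∑ s : Fin T → Bool, (F s + F (φ s)) := Finset.sum_le_sum (fun s _ => hpair s)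
  rw [Finset.sum_add_distrib, hsum2] at hbig
  have hFs : ∑ s : Fin T → Bool, F s = ∑ s : Fin T → Bool,
      ‖projGrad (Set.Icc (-1 : ℝ) 1) η (Favg (lossAt T (cfun T w N s)) w (b + w + 2*k))
        (alg (b + w + 2*k) (cfun T w N s))‖ ^ 2 := rfl
  linarith [hbig]

end LRLB

open LRLB MeasureTheory ENNReal in
/-- A lower bound for local regret: on `K = [−1,1]`, for any
`T ≥ 1`, `1 ≤ w ≤ T` and `0 < η ≤ 1`, there is a probability distribution over
sequences of affine (hence `0`-smooth) loss functions, each bounded by `1` in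
absolute value on `K`, such that every deterministic online algorithm (whose
play `x_t ∈ K` depends only on the losses of rounds `< t`) suffers expected
`w`-local regret at least `(1/(4w)) ⌊T/(2w)⌋`. -/
theorem local_regret_lower_bound (T w : ℕ) (hT : 1 ≤ T) (hw1 : 1 ≤ w) (hwT : w ≤ T)
    (η : ℝ) (hη0 : 0 < η) (hη1 : η ≤ 1) :
    ∃ μ : MeasureTheory.Measure (Fin T → ℝ × ℝ),
      MeasureTheory.IsProbabilityMeasure μ ∧
      (∀ᵐ c ∂μ, ∀ s : Fin T, ∀ x ∈ Set.Icc (-1 : ℝ) 1, |(c s).1 * x + (c s).2| ≤ 1) ∧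
      ∀ alg : ℕ → (Fin T → ℝ × ℝ) → ℝ,
        (∀ t c, alg t c ∈ Set.Icc (-1 : ℝ) 1) →
        (∀ t (c c' : Fin T → ℝ × ℝ), (∀ s : Fin T, (s : ℕ) + 1 < t → c s = c' s) →
          alg t c = alg t c') →
        ENNReal.ofReal ((1 / (4 * (w : ℝ))) * ((T / (2 * w) : ℕ) : ℝ)) ≤
          ∫⁻ c, ENNReal.ofReal (∑ t ∈ Finset.Icc 1 T,
            ‖projGrad (Set.Icc (-1 : ℝ) 1) η (Favg (lossAt T c) w t) (alg t c)‖ ^ 2) ∂μ := by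
  classical
  set M := T / (2*w) with hM
  set N := 2*w*M with hNdef
  have hNT : N ≤ T := by
    rw [hNdef, hM, mul_comm]
    exact Nat.div_mul_le_self T (2*w)
  set J := (w+1)/2 with hJ
  set μ : Measure (Fin T → ℝ × ℝ) :=
    ((2:ℝ≥0∞)^T)⁻¹ • Measure.sum (fun s : Fin T → Bool => Measure.dirac (cfun T w N s)) with hμ
  have h2T0 : ((2:ℝ≥0∞)^T) ≠ 0 := pow_ne_zero T (by norm_num)
  have h2Ttop : ((2:ℝ≥0∞)^T) ≠ ⊤ := ENNReal.pow_ne_top (by norm_num)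
  refine ⟨μ, ?_, ?_, ?_⟩
  · -- probability measure
    constructor
    rw [hμ, Measure.smul_apply, Measure.sum_apply _ MeasurableSet.univ]
    simp only [measure_univ]
    rw [tsum_fintype]
    have hcard : ∑ _s : Fin T → Bool, (1:ℝ≥0∞) = 2^T := by
      rw [Finset.sum_const, Finset.card_univ]
      simp [nsmul_eq_mul]
    rw [hcard, smul_eq_mul]
    exact ENNReal.inv_mul_cancel h2T0 h2Ttop
  · -- a.e. boundedness
    rw [hμ]
    refine Measure.ae_smul_measure ?_ _
    rw [Measure.ae_sum_iff]
    intro s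
    rw [MeasureTheory.ae_dirac_eq, Filter.eventually_pure]
    intro i x hx
    simp only [cfun]
    rw [add_zero, abs_mul]
    have h1 := abs_sl_le T w N s ((i:ℕ)+1)
    have h2 : |x| ≤ 1 := abs_le.mpr ⟨hx.1, hx.2⟩
    calc |sl T w N s ((i:ℕ)+1)| * |x| ≤ 1 * 1 :=
          mul_le_mul h1 h2 (abs_nonneg _) (by norm_num)
      _ = 1 := by norm_num
  · -- main bound
    intro alg halgK halgA
    rw [hμ, lintegral_smul_measure, lintegral_sum_measure]
    simp_rw [lintegral_dirac]
    rw [tsum_fintype]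
    have hg0 : ∀ s : Fin T → Bool, 0 ≤ ∑ t ∈ Finset.Icc 1 T,
        ‖projGrad (Set.Icc (-1 : ℝ) 1) η (Favg (lossAt T (cfun T w N s)) w t)
          (alg t (cfun T w N s))‖ ^ 2 := by
      intro s
      apply Finset.sum_nonneg
      intro t _
      positivity
    rw [← ENNReal.ofReal_sum_of_nonneg (fun s _ => hg0 s)]
    -- the core real inequality
    have hcore : (2:ℝ)^T * ((1 / (4 * (w : ℝ))) * (M : ℝ)) ≤
        ∑ s : Fin T → Bool, ∑ t ∈ Finset.Icc 1 T,
          ‖projGrad (Set.Icc (-1 : ℝ) 1) η (Favg (lossAt T (cfun T w N s)) w t)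
            (alg t (cfun T w N s))‖ ^ 2 := by
      rw [Finset.sum_comm]
      have hblock : ∀ j < M, 2*w*j % (2*w) = 0 ∧ 2*w*j + 2*w ≤ N := by
        intro j hj
        refine ⟨Nat.mul_mod_right (2*w) j, ?_⟩
        have h1 : 2*w*(j+1) ≤ 2*w*M := Nat.mul_le_mul_left (2*w) hj
        calc 2*w*j + 2*w = 2*w*(j+1) := by ring
          _ ≤ 2*w*M := h1
          _ = N := hNdef.symm
      have hkJ : ∀ k < J, 2*k + 1 ≤ w := by intro k hk; omega
      set f : ℕ × ℕ → ℕ := fun p => 2*w*p.1 + w + 2*p.2 with hf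
      have hmodf : ∀ p : ℕ × ℕ, p.2 < J → f p % (2*w) = w + 2*p.2 := by
        intro p hp2
        have h1 : f p = 2*w*p.1 + (w + 2*p.2) := by rw [hf]; ring
        rw [h1, Nat.mul_add_mod]
        exact Nat.mod_eq_of_lt (by have := hkJ p.2 hp2; omega)
      have hinj : ∀ p ∈ Finset.range M ×ˢ Finset.range J,
          ∀ q ∈ Finset.range M ×ˢ Finset.range J, f p = f q → p = q := by
        intro p hp q hq heq
        rw [Finset.mem_product, Finset.mem_range, Finset.mem_range] at hp hq
        have h1 : w + 2*p.2 = w + 2*q.2 := by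
          rw [← hmodf p hp.2, ← hmodf q hq.2, heq]
        have hk2 : p.2 = q.2 := by omega
        have h2 : 2*w*p.1 = 2*w*q.1 := by
          have heq' : 2*w*p.1 + (w + 2*p.2) = 2*w*q.1 + (w + 2*q.2) := by
            have e1 : f p = 2*w*p.1 + (w + 2*p.2) := by rw [hf]; ring
            have e2 : f q = 2*w*q.1 + (w + 2*q.2) := by rw [hf]; ring
            rw [← e1, ← e2, heq]
          rw [h1] at heq'
          exact Nat.add_right_cancel heq'
        have hk1 : p.1 = q.1 := Nat.eq_of_mul_eq_mul_left (by omega) h2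
        exact Prod.ext hk1 hk2
      have hsubset : (Finset.range M ×ˢ Finset.range J).image f ⊆ Finset.Icc 1 T := by
        intro t ht
        obtain ⟨p, hp, rfl⟩ := Finset.mem_image.mp ht
        rw [Finset.mem_product, Finset.mem_range, Finset.mem_range] at hp
        obtain ⟨hm0, hmN⟩ := hblock p.1 hp.1
        rw [Finset.mem_Icc]
        have hq : w + 2*p.2 ≤ 2*w := by have := hkJ p.2 hp.2; omega
        have hfp : f p = 2*w*p.1 + (w + 2*p.2) := by rw [hf]; ring
        constructor
        · rw [hfp]; omega
        · rw [hfp]; omega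
      have hstep1 : ∑ t ∈ (Finset.range M ×ˢ Finset.range J).image f,
            (∑ s : Fin T → Bool,
              ‖projGrad (Set.Icc (-1 : ℝ) 1) η (Favg (lossAt T (cfun T w N s)) w t)
                (alg t (cfun T w N s))‖ ^ 2) ≤
          ∑ t ∈ Finset.Icc 1 T, (∑ s : Fin T → Bool,
              ‖projGrad (Set.Icc (-1 : ℝ) 1) η (Favg (lossAt T (cfun T w N s)) w t)
                (alg t (cfun T w N s))‖ ^ 2) := by
        apply Finset.sum_le_sum_of_subset_of_nonneg hsubset
        intro t _ _
        apply Finset.sum_nonneg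
        intro s _
        positivity
      have hstep2 : ((M:ℝ) * J) * ((2:ℝ)^T * (1/(w:ℝ))^2 / 2) ≤
          ∑ t ∈ (Finset.range M ×ˢ Finset.range J).image f,
            (∑ s : Fin T → Bool,
              ‖projGrad (Set.Icc (-1 : ℝ) 1) η (Favg (lossAt T (cfun T w N s)) w t)
                (alg t (cfun T w N s))‖ ^ 2) := by
        rw [Finset.sum_image hinj]
        have hlow : ∀ p ∈ Finset.range M ×ˢ Finset.range J,
            (2:ℝ)^T * (1/(w:ℝ))^2 / 2 ≤
            ∑ s : Fin T → Bool,
              ‖projGrad (Set.Icc (-1 : ℝ) 1) η (Favg (lossAt T (cfun T w N s)) w (f p))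
                (alg (f p) (cfun T w N s))‖ ^ 2 := by
          intro p hp
          rw [Finset.mem_product, Finset.mem_range, Finset.mem_range] at hp
          obtain ⟨hm0, hmN⟩ := hblock p.1 hp.1
          exact signal_sum_bound T w N hw1 hNT η hη0 hη1 alg halgK halgA
            (f p) (2*w*p.1) p.2 (by rw [hf]) hm0 hmN (hkJ p.2 hp.2)
        calc ((M:ℝ) * J) * ((2:ℝ)^T * (1/(w:ℝ))^2 / 2)
            = ∑ _p ∈ Finset.range M ×ˢ Finset.range J,
                ((2:ℝ)^T * (1/(w:ℝ))^2 / 2) := by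
              rw [Finset.sum_const, Finset.card_product, Finset.card_range,
                Finset.card_range, nsmul_eq_mul]
              push_cast
              ring
          _ ≤ _ := Finset.sum_le_sum hlow
      have hnum : (2:ℝ)^T * ((1 / (4 * (w : ℝ))) * (M : ℝ)) ≤
          ((M:ℝ) * J) * ((2:ℝ)^T * (1/(w:ℝ))^2 / 2) := by
        have hw' : (1:ℝ) ≤ (w:ℝ) := by exact_mod_cast hw1
        have hwpos : (0:ℝ) < (w:ℝ) := by linarith
        have hJw : (w:ℝ) ≤ 2*(J:ℝ) := by
          have : w ≤ 2*J := by omega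
          exact_mod_cast this
        have hMpos : (0:ℝ) ≤ (M:ℝ) := Nat.cast_nonneg M
        have hP : (0:ℝ) < (2:ℝ)^T := by positivity
        have hJineq : 1/(4*(w:ℝ)) ≤ (J:ℝ)*((1/(w:ℝ))^2/2) := by
          rw [div_le_iff₀ (by positivity : (0:ℝ) < 4*(w:ℝ))]
          have hexp : (J:ℝ)*((1/(w:ℝ))^2/2)*(4*(w:ℝ)) = 2*(J:ℝ)/(w:ℝ) := by
            field_simp
            ring
          rw [hexp, le_div_iff₀ hwpos]
          linarith
        have h2 : (M:ℝ) * (1/(4*(w:ℝ))) ≤ (M:ℝ)*((J:ℝ)*((1/(w:ℝ))^2/2)) :=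
          mul_le_mul_of_nonneg_left hJineq hMpos
        calc (2:ℝ)^T * ((1 / (4 * (w : ℝ))) * (M : ℝ))
            = (2:ℝ)^T * ((M:ℝ) * (1/(4*(w:ℝ)))) := by ring
          _ ≤ (2:ℝ)^T * ((M:ℝ)*((J:ℝ)*((1/(w:ℝ))^2/2))) :=
              mul_le_mul_of_nonneg_left h2 hP.le
          _ = ((M:ℝ) * J) * ((2:ℝ)^T * (1/(w:ℝ))^2 / 2) := by ring
      linarith [hstep1, hstep2, hnum]
    have hB0 : (0:ℝ) ≤ (1 / (4 * (w : ℝ))) * (M : ℝ) := by positivity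
    calc ENNReal.ofReal ((1 / (4 * (w : ℝ))) * (M : ℝ))
        = ((2:ℝ≥0∞)^T)⁻¹ * (((2:ℝ≥0∞)^T) * ENNReal.ofReal ((1 / (4 * (w : ℝ))) * (M : ℝ))) := by
          rw [← mul_assoc, ENNReal.inv_mul_cancel h2T0 h2Ttop, one_mul]
      _ = ((2:ℝ≥0∞)^T)⁻¹ * ENNReal.ofReal ((2:ℝ)^T * ((1 / (4 * (w : ℝ))) * (M : ℝ))) := by
          rw [ENNReal.ofReal_mul (by positivity : (0:ℝ) ≤ (2:ℝ)^T)]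
          congr 1
          rw [ENNReal.ofReal_pow (by norm_num : (0:ℝ) ≤ 2)]
          norm_num
      _ ≤ ((2:ℝ≥0∞)^T)⁻¹ * ENNReal.ofReal (∑ s : Fin T → Bool, ∑ t ∈ Finset.Icc 1 T,
            ‖projGrad (Set.Icc (-1 : ℝ) 1) η (Favg (lossAt T (cfun T w N s)) w t)
              (alg t (cfun T w N s))‖ ^ 2) :=
          mul_le_mul_right (ENNReal.ofReal_le_ofReal hcore) _
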